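/- If A ⊆ {0,1}^n contains no chain of size ℓ+1 (no ℓ+1 pairwise comparable elements under the componentwise order), then |A| is at most the sum of the ℓ largest binomial coefficients of order n, i.e. |A| ≤ Σ_{k=⌊(n−ℓ+1)/2⌋}^{⌊(n+ℓ−1)/2⌋} C(n,k). -/

import Mathlib

/-- State of a Boolean network with `n` components. -/
abbrev BState (n : ℕ) := Fin n → Bool

/-- Positive arc `j → i` in the global interaction graph `G(f)`:
the discrete partial derivative `f_{ij}` is positive at some state. -/
def posArc {n : ℕ} (f : BState n → BState n) (j i : Fin n) : Prop :=
  ∃ x : BState n, f (Function.update x j true) i = true ∧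
    f (Function.update x j false) i = false

/-- Negative arc `j → i` in `G(f)`:
the discrete partial derivative `f_{ij}` is negative at some state. -/
def negArc {n : ℕ} (f : BState n → BState n) (j i : Fin n) : Prop :=
  ∃ x : BState n, f (Function.update x j true) i = false ∧
    f (Function.update x j false) i = true

/-- Unsigned arc `j → i` in the interaction graph: `f_i` depends on `x_j`. -/
def arc {n : ℕ} (f : BState n → BState n) (j i : Fin n) : Prop :=
  posArc f j i ∨ negArc f j i

/-- Arc of given sign (`true` = positive, `false` = negative). -/
def signedArc {n : ℕ} (f : BState n → BState n) (ε : Bool) (j i : Fin n) : Prop :=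
  if ε then posArc f j i else negArc f j i

/-- A signed cycle of `G(f)`: vertices `vert 0 → vert 1 → ⋯ → vert len → vert 0`
(so the length is `len + 1`), pairwise distinct, each consecutive arc present in
`G(f)` with sign `sign k`. -/
structure SignedCycle {n : ℕ} (f : BState n → BState n) where
  len : ℕ
  vert : Fin (len + 1) → Fin n
  inj : Function.Injective vert
  sign : Fin (len + 1) → Bool
  arcs : ∀ k : Fin (len + 1), signedArc f (sign k) (vert k) (vert (k + 1))

/-- Length (number of arcs) of a signed cycle. -/
def SignedCycle.length {n : ℕ} {f : BState n → BState n} (C : SignedCycle f) : ℕ :=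
  C.len + 1

/-- A cycle is positive iff it has an even number of negative arcs. -/
def SignedCycle.Positive {n : ℕ} {f : BState n → BState n} (C : SignedCycle f) : Prop :=
  Even (Finset.univ.filter (fun k => C.sign k = false)).card

/-- A cycle is negative iff it has an odd number of negative arcs. -/
def SignedCycle.Negative {n : ℕ} {f : BState n → BState n} (C : SignedCycle f) : Prop :=
  Odd (Finset.univ.filter (fun k => C.sign k = false)).card

/-- An unsigned cycle of the interaction graph. -/
structure UCycle {n : ℕ} (f : BState n → BState n) where
  len : ℕ
  vert : Fin (len + 1) → Fin n
  inj : Function.Injective vert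
  arcs : ∀ k : Fin (len + 1), arc f (vert k) (vert (k + 1))

/-- One step of the asynchronous dynamics `Γ(f)`. -/
def asyncStep {n : ℕ} (f : BState n → BState n) (x y : BState n) : Prop :=
  ∃ i : Fin n, f x i ≠ x i ∧ y = Function.update x i (f x i)

/-- There is a path of length `L` from `x` to `y` in `Γ(f)`. -/
def asyncPath {n : ℕ} (f : BState n → BState n) (x y : BState n) (L : ℕ) : Prop :=
  ∃ p : ℕ → BState n, p 0 = x ∧ p L = y ∧ ∀ k < L, asyncStep f (p k) (p (k + 1))

section ErdosAux

open Finset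


open Finset

lemma choose_mono_half {n a b : ℕ} (hab : a ≤ b) (hb : 2 * b ≤ n + 1) :
    n.choose a ≤ n.choose b := by
  induction b with
  | zero => simp [Nat.le_zero.mp hab]
  | succ b ih =>
    rcases Nat.lt_or_ge a (b+1) with h | h
    · have h1 : n.choose a ≤ n.choose b := ih (Nat.lt_succ_iff.mp h) (by omega)
      refine h1.trans ?_
      rcases Nat.lt_or_ge b (n/2) with hb2 | hb2
      · exact Nat.choose_le_succ_of_lt_half_left hb2
      · have hn : n = b + (b + 1) := by omega
        exact (Nat.choose_symm_of_eq_add hn).le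
    · have : a = b + 1 := by omega
      simp [this]

lemma choose_outside_le {n ℓ r j : ℕ} (hl1 : 1 ≤ ℓ) (hln : ℓ ≤ n) (hr : r ≤ n)
    (hrout : r < (n - ℓ + 1) / 2 ∨ (n + ℓ - 1) / 2 < r)
    (hjlo : (n - ℓ + 1) / 2 ≤ j) (hjhi : j ≤ (n + ℓ - 1) / 2) :
    n.choose r ≤ n.choose j := by
  set lo := (n - ℓ + 1) / 2 with hlo
  set hi := (n + ℓ - 1) / 2 with hhi
  have hsum1 : lo + hi ≤ n := by omega
  have hsum2 : n - 1 ≤ lo + hi := by omega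
  have hjn : j ≤ n := by omega
  rcases hrout with h | h
  · rcases Nat.lt_or_ge (2 * j) (n + 2) with hj2 | hj2
    · exact choose_mono_half (by omega) (by omega)
    · have : n.choose j = n.choose (n - j) := (Nat.choose_symm hjn).symm
      rw [this]
      exact choose_mono_half (by omega) (by omega)
  · have hrs : n.choose r = n.choose (n - r) := (Nat.choose_symm hr).symm
    rw [hrs]
    rcases Nat.lt_or_ge (2 * j) (n + 2) with hj2 | hj2
    · exact choose_mono_half (by omega) (by omega)
    · have : n.choose j = n.choose (n - j) := (Nat.choose_symm hjn).symm
      rw [this]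
      exact choose_mono_half (by omega) (by omega)

variable {α : Type*} [DecidableEq α] [Fintype α]

lemma lym_chain : ∀ (ℓ : ℕ) (𝒜 : Finset (Finset α)),
    (∀ c ⊆ 𝒜, (∀ x ∈ c, ∀ y ∈ c, x ⊆ y ∨ y ⊆ x) → c.card ≤ ℓ) →
    ∑ r ∈ range (Fintype.card α + 1), ((𝒜 # r).card : ℚ) / (Fintype.card α).choose r
      ≤ ℓ := by
  intro ℓ
  induction ℓ with
  | zero =>
    intro 𝒜 h
    have h𝒜 : 𝒜 = ∅ := by
      by_contra hne
      obtain ⟨s, hs⟩ := nonempty_iff_ne_empty.mpr hne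
      have := h {s} (by simpa) (by simp)
      simp at this
    simp [h𝒜, Finset.slice]
  | succ ℓ ih =>
    intro 𝒜 h
    set M := 𝒜.filter (fun s => ∀ t ∈ 𝒜, s ⊆ t → s = t) with hM
    have hMA : IsAntichain (· ⊆ ·) (M : Set (Finset α)) := by
      intro s hs t ht hne hsub
      simp only [hM, coe_filter, Set.mem_setOf_eq] at hs
      exact hne (hs.2 t (by simpa [hM] using (mem_coe.mp ht) |> fun h' => (mem_filter.mp h').1) hsub)
    set 𝒜' := 𝒜 \ M with h𝒜'
    have h' : ∀ c ⊆ 𝒜', (∀ x ∈ c, ∀ y ∈ c, x ⊆ y ∨ y ⊆ x) → c.card ≤ ℓ := by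
      intro c hc hcomp
      rcases c.eq_empty_or_nonempty with rfl | hne
      · simp
      obtain ⟨t, htc, htmax⟩ := c.exists_max_image card hne
      have htA' : t ∈ 𝒜' := hc htc
      have htA : t ∈ 𝒜 := (mem_sdiff.mp htA').1
      have htM : t ∉ M := (mem_sdiff.mp htA').2
      have : ∃ u ∈ 𝒜, t ⊆ u ∧ t ≠ u := by
        by_contra hcon
        push_neg at hcon
        exact htM (mem_filter.mpr ⟨htA, fun u hu hsub => hcon u hu hsub⟩)
      obtain ⟨u, huA, htu, htune⟩ := this
      have hsub : ∀ s ∈ c, s ⊆ t := by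
        intro s hsc
        rcases hcomp s hsc t htc with h1 | h1
        · exact h1
        · exact le_of_eq (eq_of_subset_of_card_le h1 (htmax s hsc)).symm
      have huc : u ∉ c := fun huc => htune (Subset.antisymm htu (hsub u huc))
      have := h (insert u c) (insert_subset huA (hc.trans (sdiff_subset)))
        (by
          intro x hx y hy
          rcases mem_insert.mp hx with hx' | hx' <;> rcases mem_insert.mp hy with hy' | hy'
          · exact Or.inl (subset_of_eq (hx'.trans hy'.symm))
          · exact Or.inr (hx' ▸ ((hsub y hy').trans htu))
          · exact Or.inl (hy' ▸ ((hsub x hx').trans htu))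
          · exact hcomp x hx' y hy')
      rw [card_insert_of_notMem huc] at this
      omega
    have hsplit : ∀ r, (𝒜 # r).card = (M # r).card + (𝒜' # r).card := by
      intro r
      have hU : 𝒜 = M ∪ 𝒜' := by
        rw [h𝒜', union_sdiff_of_subset (filter_subset _ _)]
      rw [hU]
      show ((M ∪ 𝒜').filter _).card = _
      rw [filter_union]
      exact card_union_of_disjoint (disjoint_filter_filter (disjoint_sdiff))
    calc ∑ r ∈ range (Fintype.card α + 1), ((𝒜 # r).card : ℚ) / (Fintype.card α).choose r
        = ∑ r ∈ range (Fintype.card α + 1), (((M # r).card : ℚ) / (Fintype.card α).choose r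
            + ((𝒜' # r).card : ℚ) / (Fintype.card α).choose r) := by
          refine Finset.sum_congr rfl fun r _ => ?_
          rw [hsplit r]
          push_cast
          ring
      _ = (∑ r ∈ range (Fintype.card α + 1), ((M # r).card : ℚ) / (Fintype.card α).choose r)
            + ∑ r ∈ range (Fintype.card α + 1), ((𝒜' # r).card : ℚ) / (Fintype.card α).choose r :=
          Finset.sum_add_distrib
      _ ≤ 1 + ℓ := add_le_add (Finset.sum_card_slice_div_choose_le_one hMA) (ih 𝒜' h')
      _ = (ℓ + 1 : ℕ) := by push_cast; ring

lemma chainfree_card_le (ℓ : ℕ) (𝒜 : Finset (Finset α))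
    (h : ∀ c ⊆ 𝒜, (∀ x ∈ c, ∀ y ∈ c, x ⊆ y ∨ y ⊆ x) → c.card ≤ ℓ) :
    𝒜.card ≤ ∑ k ∈ Icc ((Fintype.card α - ℓ + 1) / 2) ((Fintype.card α + ℓ - 1) / 2),
      (Fintype.card α).choose k := by
  set n := Fintype.card α with hn
  rcases Nat.eq_zero_or_pos ℓ with rfl | hl1
  · have h𝒜 : 𝒜 = ∅ := by
      by_contra hne
      obtain ⟨s, hs⟩ := nonempty_iff_ne_empty.mpr hne
      have := h {s} (by simpa) (by simp)
      simp at this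
    simp [h𝒜]
  rcases Nat.lt_or_ge n ℓ with hln | hln
  · -- ℓ > n : trivial bound via 2^n
    have h1 : 𝒜.card ≤ 2 ^ n := by
      calc 𝒜.card ≤ Fintype.card (Finset α) := card_le_univ 𝒜
        _ = 2 ^ n := by rw [Fintype.card_finset]
    have hlo : (n - ℓ + 1) / 2 = 0 := by omega
    have hhi : n ≤ (n + ℓ - 1) / 2 := by omega
    calc 𝒜.card ≤ 2 ^ n := h1
      _ = ∑ k ∈ range (n + 1), n.choose k := (Nat.sum_range_choose n).symm
      _ ≤ ∑ k ∈ Icc ((n - ℓ + 1) / 2) ((n + ℓ - 1) / 2), n.choose k := by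
          refine Finset.sum_le_sum_of_subset ?_
          intro k hk
          simp only [mem_range] at hk
          simp only [mem_Icc]
          omega
  -- main case : 1 ≤ ℓ ≤ n
  set lo := (n - ℓ + 1) / 2 with hlo
  set hi := (n + ℓ - 1) / 2 with hhi
  have hhin : hi ≤ n := by omega
  have hBsub : Icc lo hi ⊆ range (n + 1) := by
    intro k hk; simp only [mem_Icc] at hk; simp only [mem_range]; omega
  have hcardB : (Icc lo hi).card = ℓ := by rw [Nat.card_Icc]; omega
  have hlym := lym_chain ℓ 𝒜 h
  rw [← hn] at hlym
  set a : ℕ → ℚ := fun r => ((𝒜 # r).card : ℚ) with ha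
  set c : ℕ → ℚ := fun r => ((n.choose r : ℕ) : ℚ) with hc
  have hcpos : ∀ r ∈ range (n + 1), 0 < c r := by
    intro r hr; simp only [mem_range] at hr
    have := Nat.choose_pos (n := n) (k := r) (by omega)
    simpa [hc] using (Nat.cast_pos (α := ℚ)).mpr this
  have hac : ∀ r, a r ≤ c r := by
    intro r
    have := Set.Sized.card_le (Finset.sized_slice (𝒜 := 𝒜) (r := r))
    rw [← hn] at this
    simp only [ha, hc]
    exact_mod_cast this
  have hanneg : ∀ r, 0 ≤ a r := fun r => by positivity
  set m : ℚ := c lo with hm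
  have hmle : ∀ k ∈ Icc lo hi, m ≤ c k := by
    intro k hk; simp only [mem_Icc] at hk
    have hch : n.choose lo ≤ n.choose k := by
      rcases Nat.lt_or_ge (2 * k) (n + 2) with h2 | h2
      · exact choose_mono_half hk.1 (by omega)
      · rw [← Nat.choose_symm (show k ≤ n by omega)]
        exact choose_mono_half (by omega) (by omega)
    simp only [hm, hc]
    exact_mod_cast hch
  have hmnneg : 0 ≤ m := le_of_lt (hcpos lo (by simp only [mem_range]; omega))
  have hout : ∀ r ∈ range (n + 1) \ Icc lo hi, c r ≤ m := by
    intro r hr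
    rw [mem_sdiff, mem_range, mem_Icc] at hr
    simp only [hm, hc]
    have := choose_outside_le (n := n) (ℓ := ℓ) (r := r) (j := lo) hl1 hln (by omega)
      (by omega) le_rfl (by omega)
    exact_mod_cast this
  have hsplitR : ∀ f : ℕ → ℚ, ∑ r ∈ range (n + 1), f r
      = (∑ r ∈ range (n + 1) \ Icc lo hi, f r) + ∑ k ∈ Icc lo hi, f k :=
    fun f => (Finset.sum_sdiff hBsub).symm
  have h1 : ∑ r ∈ range (n + 1) \ Icc lo hi, a r
      ≤ m * ∑ r ∈ range (n + 1) \ Icc lo hi, a r / c r := by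
    rw [mul_sum]
    refine Finset.sum_le_sum fun r hr => ?_
    have hrR : r ∈ range (n + 1) := (mem_sdiff.mp hr).1
    have hc0 : c r ≠ 0 := ne_of_gt (hcpos r hrR)
    calc a r = c r * (a r / c r) := (mul_div_cancel₀ _ hc0).symm
      _ ≤ m * (a r / c r) :=
        mul_le_mul_of_nonneg_right (hout r hr) (div_nonneg (hanneg r) (hcpos r hrR).le)
  have h2 : ∑ r ∈ range (n + 1) \ Icc lo hi, a r / c r
      ≤ (ℓ : ℚ) - ∑ k ∈ Icc lo hi, a k / c k := by
    have := hsplitR (fun r => a r / c r)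
    simp only [ha, hc] at this hlym ⊢
    push_cast at this hlym ⊢
    linarith
  have hml : m * (ℓ : ℚ) = ∑ _k ∈ Icc lo hi, m := by
    rw [Finset.sum_const, hcardB, nsmul_eq_mul, mul_comm]
  have hfinal : ∑ r ∈ range (n + 1), a r ≤ ∑ k ∈ Icc lo hi, c k := by
    calc ∑ r ∈ range (n + 1), a r
        = (∑ r ∈ range (n + 1) \ Icc lo hi, a r) + ∑ k ∈ Icc lo hi, a k := hsplitR a
      _ ≤ m * (∑ r ∈ range (n + 1) \ Icc lo hi, a r / c r) + ∑ k ∈ Icc lo hi, a k := by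
          linarith
      _ ≤ m * ((ℓ : ℚ) - ∑ k ∈ Icc lo hi, a k / c k) + ∑ k ∈ Icc lo hi, a k := by
          have := mul_le_mul_of_nonneg_left h2 hmnneg
          linarith
      _ = ∑ k ∈ Icc lo hi, (a k + m - m * (a k / c k)) := by
          rw [Finset.sum_sub_distrib, Finset.sum_add_distrib, Finset.sum_const, hcardB,
            nsmul_eq_mul, ← Finset.mul_sum]
          ring
      _ ≤ ∑ k ∈ Icc lo hi, c k := by
          refine Finset.sum_le_sum fun k hk => ?_
          have hkR : k ∈ range (n + 1) := hBsub hk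
          have hc0 : (0 : ℚ) < c k := hcpos k hkR
          have hexp : a k + m - m * (a k / c k)
              = c k - (c k - a k) * (c k - m) / c k := by
            field_simp
            ring
          rw [hexp]
          have hnn : 0 ≤ (c k - a k) * (c k - m) / c k :=
            div_nonneg (mul_nonneg (by linarith [hac k]) (by linarith [hmle k hk])) hc0.le
          linarith
  -- convert back to ℕ
  have hcard : ∑ r ∈ range (n + 1), a r = (𝒜.card : ℚ) := by
    have hIic : range (n + 1) = Iic n := by ext k; simp [Nat.lt_succ_iff]
    rw [ha]
    rw [hIic]
    norm_cast
    rw [hn]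
    show ∑ r ∈ Iic (Fintype.card α), ((𝒜 # r).card : ℚ) = _
    exact_mod_cast Finset.sum_card_slice 𝒜
  rw [hcard] at hfinal
  have : (𝒜.card : ℚ) ≤ ((∑ k ∈ Icc lo hi, n.choose k : ℕ) : ℚ) := by
    push_cast
    exact hfinal
  exact_mod_cast this


/-- Erdős' theorem: a subset of `{0,1}^n` with no chain of size `ℓ + 1` has
cardinality at most the sum of the `ℓ` largest binomial coefficients of order `n`. -/
theorem stmt6 {n ℓ : ℕ} (A : Finset (BState n))
    (h : ¬ ∃ c : Finset (BState n), c ⊆ A ∧ c.card = ℓ + 1 ∧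
      ∀ x ∈ c, ∀ y ∈ c, x ≤ y ∨ y ≤ x) :
    A.card ≤ ∑ k ∈ Finset.Icc ((n - ℓ + 1) / 2) ((n + ℓ - 1) / 2), n.choose k := by
  classical
  set e : BState n → Finset (Fin n) := fun x => univ.filter (fun i => x i = true) with he
  have hord : ∀ x y : BState n, e x ⊆ e y → x ≤ y := by
    intro x y hxy i
    cases hx : x i
    · exact Bool.false_le _
    · have : i ∈ e x := by simp [he, hx]
      have := hxy this
      simp only [he, mem_filter] at this
      rw [this.2]
  have hinj : Function.Injective e := by
    intro x y hxy
    funext i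
    have : (i ∈ e x) = (i ∈ e y) := by rw [hxy]
    simpa [he] using this
  set 𝒜 : Finset (Finset (Fin n)) := A.image e with h𝒜
  have hcards : 𝒜.card = A.card := card_image_of_injective A hinj
  have hchain : ∀ c ⊆ 𝒜, (∀ x ∈ c, ∀ y ∈ c, x ⊆ y ∨ y ⊆ x) → c.card ≤ ℓ := by
    intro c hc hcomp
    by_contra hcard
    push_neg at hcard
    obtain ⟨c₂, hc₂c, hc₂card⟩ := Finset.exists_subset_card_eq (show ℓ + 1 ≤ c.card from hcard)
    set c' : Finset (BState n) := A.filter (fun x => e x ∈ c₂) with hc'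
    have himg : c'.image e = c₂ := by
      apply Finset.Subset.antisymm
      · intro t ht
        obtain ⟨x, hx, rfl⟩ := mem_image.mp ht
        exact (mem_filter.mp hx).2
      · intro t ht
        obtain ⟨x, hxA, rfl⟩ := mem_image.mp (hc (hc₂c ht))
        exact mem_image.mpr ⟨x, mem_filter.mpr ⟨hxA, ht⟩, rfl⟩
    refine h ⟨c', filter_subset _ _, ?_, ?_⟩
    · rw [← hc₂card, ← himg, card_image_of_injective _ hinj]
    · intro x hx y hy
      have hxm : e x ∈ c₂ := (mem_filter.mp hx).2
      have hym : e y ∈ c₂ := (mem_filter.mp hy).2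
      rcases hcomp _ (hc₂c hxm) _ (hc₂c hym) with h1 | h1
      · exact Or.inl (hord _ _ h1)
      · exact Or.inr (hord _ _ h1)
  have := chainfree_card_le ℓ 𝒜 hchain
  rw [hcards] at this
  simpa using this


end ErdosAux
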